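/- arXiv:2012.01961 — 2 statements merged into one kernel-verified Lean document; each statement's English description precedes it below -/
import Mathlib

section
/- Let K be a real symmetric n×n matrix, M a real symmetric positive definite n×n matrix, Φ a real n×r matrix whose columns form a basis of ker K, and F ∈ ℝⁿ. Define α := (Φᵀ M Φ)⁻¹ Φᵀ F and F_eq := F − M Φ α. Then there exists U ∈ ℝⁿ with K U = F_eq, and any two such solutions differ by an element of ker K. -/
open Matrix

/-- Central well-posedness statement of the inertia relief method: if the
columns of `Φ` form a basis of `ker K`, `M` is symmetric positive definite,
`α := (Φᵀ M Φ)⁻¹ Φᵀ F` and `F_eq := F − M Φ α`, then `K U = F_eq` is solvable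
and any two solutions differ by an element of `ker K`. -/
theorem inertia_relief_wellPosed
    (n r : ℕ) (K : Matrix (Fin n) (Fin n) ℝ) (hK : K.IsSymm)
    (M : Matrix (Fin n) (Fin n) ℝ) (hM : M.PosDef)
    (Φ : Matrix (Fin n) (Fin r) ℝ)
    (hΦind : ∀ c : Fin r → ℝ, Φ.mulVec c = 0 → c = 0)
    (hΦspan : ∀ z : Fin n → ℝ, K.mulVec z = 0 ↔ ∃ c : Fin r → ℝ, z = Φ.mulVec c)
    (F : Fin n → ℝ) (α : Fin r → ℝ)
    (hα : α = ((Φᵀ * M * Φ)⁻¹).mulVec (Φᵀ.mulVec F))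
    (Feq : Fin n → ℝ) (hFeq : Feq = F - M.mulVec (Φ.mulVec α)) :
    (∃ U : Fin n → ℝ, K.mulVec U = Feq) ∧
      ∀ U₁ U₂ : Fin n → ℝ, K.mulVec U₁ = Feq → K.mulVec U₂ = Feq →
        K.mulVec (U₁ - U₂) = 0 := by
  have hMsym : Mᵀ = M := by
    have := hM.isHermitian
    rwa [Matrix.IsHermitian, Matrix.conjTranspose_eq_transpose_of_trivial] at this
  have hKsym : Kᵀ = K := hK
  constructor
  · -- `A := Φᵀ M Φ` is positive definite, hence invertible.
    set A : Matrix (Fin r) (Fin r) ℝ := Φᵀ * M * Φ with hA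
    have hApd : A.PosDef := by
      refine Matrix.PosDef.of_dotProduct_mulVec_pos ?_ ?_
      · rw [Matrix.IsHermitian, Matrix.conjTranspose_eq_transpose_of_trivial, hA,
          Matrix.transpose_mul, Matrix.transpose_mul, Matrix.transpose_transpose, hMsym,
          Matrix.mul_assoc]
      · intro x hx
        have hΦx : Φ.mulVec x ≠ 0 := fun h => hx (hΦind x h)
        have h2 := hM.dotProduct_mulVec_pos hΦx
        have hstar : (star x : Fin r → ℝ) = x := by
          simp [star]
        calc (0:ℝ) < dotProduct (star (Φ.mulVec x)) (M.mulVec (Φ.mulVec x)) := h2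
          _ = dotProduct (star x) (A.mulVec x) := by
              have hs : (star (Φ.mulVec x) : Fin n → ℝ) = Φ.mulVec x := by simp [star]
              rw [hs, hstar, hA, Matrix.dotProduct_mulVec x, ← Matrix.vecMul_vecMul,
                ← Matrix.vecMul_vecMul, Matrix.vecMul_transpose,
                ← Matrix.dotProduct_mulVec, ← Matrix.dotProduct_mulVec]
    have hAinv : A * A⁻¹ = 1 := Matrix.mul_nonsing_inv A hApd.det_pos.ne'.isUnit
    -- `Φᵀ Feq = 0`
    have hperp : Φᵀ.mulVec Feq = 0 := by
      rw [hFeq, Matrix.mulVec_sub, hα]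
      have : Φᵀ.mulVec (M.mulVec (Φ.mulVec (A⁻¹.mulVec (Φᵀ.mulVec F)))) =
          Φᵀ.mulVec F := by
        rw [Matrix.mulVec_mulVec, Matrix.mulVec_mulVec, Matrix.mulVec_mulVec,
          ← hA, hAinv, Matrix.one_mulVec]
      rw [this, sub_self]
    -- work in Euclidean space
    let f : EuclideanSpace ℝ (Fin n) →ₗ[ℝ] EuclideanSpace ℝ (Fin n) := Matrix.toEuclideanLin K
    have hle : LinearMap.range f ≤ (LinearMap.ker f)ᗮ := by
      rintro _ ⟨x, rfl⟩
      intro u hu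
      have hu' : K.mulVec u = 0 := congrArg WithLp.ofLp hu
      have : (@inner ℝ (EuclideanSpace ℝ (Fin n)) _ u (f x)) = dotProduct u (K.mulVec x) := by
        rw [EuclideanSpace.inner_eq_star_dotProduct, star_trivial, dotProduct_comm]
        rfl
      rw [this, Matrix.dotProduct_mulVec, ← Matrix.mulVec_transpose, hKsym, hu',
        zero_dotProduct]
    have h1 := LinearMap.finrank_range_add_finrank_ker f
    have h2 := Submodule.finrank_add_finrank_orthogonal (LinearMap.ker f)
    have hdim : Module.finrank ℝ (EuclideanSpace ℝ (Fin n)) = n := by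
      simp [finrank_euclideanSpace]
    have heq : Module.finrank ℝ (LinearMap.range f) =
        Module.finrank ℝ ((LinearMap.ker f)ᗮ) := by
      rw [hdim] at h1 h2; omega
    have hre : LinearMap.range f = (LinearMap.ker f)ᗮ :=
      Submodule.eq_of_le_of_finrank_eq hle heq
    have hFeqmem : WithLp.toLp 2 Feq ∈ (LinearMap.ker f)ᗮ := by
      intro u hu
      have hu' : K.mulVec u = 0 := congrArg WithLp.ofLp hu
      obtain ⟨c, hc⟩ := (hΦspan u).mp hu'
      have : (@inner ℝ (EuclideanSpace ℝ (Fin n)) _ u (WithLp.toLp 2 Feq)) =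
          dotProduct (Φ.mulVec c) Feq := by
        rw [EuclideanSpace.inner_eq_star_dotProduct, star_trivial, dotProduct_comm, ← hc]
      rw [this, dotProduct_comm, Matrix.dotProduct_mulVec,
        ← Matrix.mulVec_transpose, hperp, zero_dotProduct]
    rw [← hre] at hFeqmem
    obtain ⟨U, hU⟩ := hFeqmem
    exact ⟨WithLp.ofLp U, congrArg WithLp.ofLp hU⟩
  · intro U₁ U₂ h₁ h₂
    rw [Matrix.mulVec_sub, h₁, h₂, sub_self]
end

section
/- Let K be a real symmetric positive semidefinite (n_l + n_s)×(n_l + n_s) matrix in block form K = [[K_ll, K_ls],[K_sl, K_ss]] with K_ll positive definite and dim ker K = n_s, and let Φ = [−K_ll⁻¹ K_ls ; I_{n_s}] (whose columns form a basis of ker K). Let F_eq = (F_l, F_s) ∈ ℝ^{n_l + n_s} satisfy Φᵀ F_eq = 0. Then the vector U = (K_ll⁻¹ F_l, 0), obtained by solving K_ll U_l = F_l and imposing U_s = 0, satisfies K U = F_eq; moreover U is the unique solution of K U = F_eq with vanishing s-components. -/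
open Matrix

/-- Final solve of the inertia relief method: for an equilibrated load
`F_eq = (F_l, F_s)` (orthogonal to the rigid body modes `Φ`), the vector
`U = (K_ll⁻¹ F_l, 0)` satisfies `K U = F_eq`, and it is the unique such
solution with vanishing `s`-components. -/
theorem inertia_relief_final_solve
    (nl ns : ℕ)
    (Kll : Matrix (Fin nl) (Fin nl) ℝ) (Kls : Matrix (Fin nl) (Fin ns) ℝ)
    (Ksl : Matrix (Fin ns) (Fin nl) ℝ) (Kss : Matrix (Fin ns) (Fin ns) ℝ)
    (K : Matrix (Fin nl ⊕ Fin ns) (Fin nl ⊕ Fin ns) ℝ)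
    (hKdef : K = Matrix.fromBlocks Kll Kls Ksl Kss)
    (hK : K.PosSemidef) (hKll : Kll.PosDef)
    (hdim : Module.finrank ℝ (LinearMap.ker K.mulVecLin) = ns)
    (Φ : Matrix (Fin nl ⊕ Fin ns) (Fin ns) ℝ)
    (hΦ : Φ = Matrix.fromRows (-(Kll⁻¹ * Kls)) (1 : Matrix (Fin ns) (Fin ns) ℝ))
    (Fl : Fin nl → ℝ) (Fs : Fin ns → ℝ)
    (hFeq : Φᵀ.mulVec (Sum.elim Fl Fs) = 0)
    (U : Fin nl ⊕ Fin ns → ℝ)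
    (hU : U = Sum.elim (Kll⁻¹.mulVec Fl) 0) :
    K.mulVec U = Sum.elim Fl Fs ∧
      ∀ V : Fin nl ⊕ Fin ns → ℝ, K.mulVec V = Sum.elim Fl Fs →
        (∀ i : Fin ns, V (Sum.inr i) = 0) → V = U := by
  have hdet : IsUnit Kll.det := isUnit_iff_ne_zero.2 hKll.det_pos.ne'
  have hinv : Kll * Kll⁻¹ = 1 := Matrix.mul_nonsing_inv _ hdet
  have hinv' : Kll⁻¹ * Kll = 1 := Matrix.nonsing_inv_mul _ hdet
  have hKllsym : Kllᵀ = Kll := hKll.1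
  have hinvsym : (Kll⁻¹)ᵀ = Kll⁻¹ := by
    rw [Matrix.transpose_nonsing_inv, hKllsym]
  -- K symmetric gives Ksl = Klsᵀ
  have hKsym : Kᵀ = K := hK.1
  have hKsl : Ksl = Klsᵀ := by
    rw [hKdef, Matrix.fromBlocks_transpose] at hKsym
    have := congrArg (fun M => Matrix.toBlocks₂₁ M) hKsym
    have h' : (fun i j => Ksl i j) = fun i j => Kls j i := by
      simpa [Matrix.toBlocks₂₁, hKdef] using this.symm
    exact h'
  -- extract Fs from equilibrium
  have hFs : Fs = (Klsᵀ * Kll⁻¹).mulVec Fl := by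
    rw [hΦ, Matrix.transpose_fromRows] at hFeq
    rw [Matrix.fromCols_mulVec_sumElim] at hFeq
    have h1 : (-(Kll⁻¹ * Kls))ᵀ.mulVec Fl + (1 : Matrix (Fin ns) (Fin ns) ℝ)ᵀ.mulVec Fs = 0 := hFeq
    rw [Matrix.transpose_neg, Matrix.transpose_mul, hinvsym, Matrix.transpose_one,
      Matrix.one_mulVec, Matrix.neg_mulVec, neg_add_eq_zero] at h1
    exact h1.symm
  have hsolve : K.mulVec U = Sum.elim Fl Fs := by
    rw [hKdef, hU, Matrix.fromBlocks_mulVec]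
    simp only [Sum.elim_comp_inl, Sum.elim_comp_inr, Matrix.mulVec_zero, add_zero]
    rw [hKsl, Matrix.mulVec_mulVec, Matrix.mulVec_mulVec, hinv, Matrix.one_mulVec, hFs]
  refine ⟨hsolve, ?_⟩
  intro V hV hVs
  have hVeq : V = Sum.elim (fun i => V (Sum.inl i)) 0 := by
    funext x; cases x with
    | inl i => rfl
    | inr i => exact hVs i
  rw [hVeq, hKdef, Matrix.fromBlocks_mulVec] at hV
  simp only [Sum.elim_comp_inl, Sum.elim_comp_inr, Matrix.mulVec_zero, add_zero] at hV
  have htop : Kll.mulVec (fun i => V (Sum.inl i)) = Fl := by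
    funext i
    have h := congrFun hV (Sum.inl i)
    simpa using h
  have hVl : (fun i => V (Sum.inl i)) = Kll⁻¹.mulVec Fl := by
    have h2 := congrArg (fun w => Kll⁻¹.mulVec w) htop
    simpa [Matrix.mulVec_mulVec, hinv', Matrix.one_mulVec] using h2
  rw [hVeq, hVl, hU]
end
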